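/- For all integers p and q: if p is even then y_{p+2k,q} = y_{p,q−1}, and if p is odd then y_{p+2k,q} = y_{p,q+1}. Consequently, every element obtained from d by finitely many applications of the operations x ↦ x ▷ u and x ↦ x ▷⁻¹ u with u ∈ {a, b, c, d, e, f} lies in the set {y_{p,q} : 0 ≤ p ≤ 2k−1, 0 ≤ q ≤ m−1}; in particular, the orbit of d under the subgroup of permutations of Q generated by the point symmetries S_a, S_b, S_c, S_d, S_e, S_f has at most 2·k·m elements. -/

import Mathlib

/-- A quandle as in the paper: a set with operations `▷` and `▷⁻¹` satisfying
axioms A1, A2, A3. -/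
class PaperQuandle (Q : Type*) where
  rhd : Q → Q → Q
  rhdInv : Q → Q → Q
  fix : ∀ x : Q, rhd x x = x
  inv_rhd : ∀ x y : Q, rhdInv (rhd x y) y = x
  rhd_inv : ∀ x y : Q, rhd (rhdInv x y) y = x
  self_distrib : ∀ x y z : Q, rhd (rhd x y) z = rhd (rhd x z) (rhd y z)

infixl:65 " ▷ " => PaperQuandle.rhd
infixl:65 " ▷⁻¹ " => PaperQuandle.rhdInv

/-- The point symmetry at `u`, as a permutation of `Q`: `x ↦ x ▷ u`,
with inverse `x ↦ x ▷⁻¹ u`. -/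
def ptSym {Q : Type*} [PaperQuandle Q] (u : Q) : Equiv.Perm Q where
  toFun x := x ▷ u
  invFun x := x ▷⁻¹ u
  left_inv x := PaperQuandle.inv_rhd x u
  right_inv x := PaperQuandle.rhd_inv x u

/-- The element `y_{p,q} = d^{(ab)^t c^q}` if `p = 2t`, and
`d^{(ab)^t a c^q}` if `p = 2t+1`.  Here the word `ab` (apply `a`, then `b`)
is the permutation `ptSym b * ptSym a`. -/
def Y {Q : Type*} [PaperQuandle Q] (a b c d : Q) (p q : ℤ) : Q :=
  if Even p then
    (ptSym c ^ q) (((ptSym b * ptSym a) ^ (p / 2)) d)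
  else
    (ptSym c ^ q) ((((ptSym b * ptSym a) ^ ((p - 1) / 2)) d) ▷ a)

private lemma grp {G : Type*} [Group G] (k : ℤ) (A B C D E F : G)
    (hA : A*A = 1) (hB : B*B = 1) (hE : E*E = 1) (hF : F*F = 1)
    (hdea : A*E*D = 1) (hbdf : F*D*B = 1)
    (hcke : E*A*(B*A)^k*C = 1) :
    Commute D (B*A) ∧ Commute C (B*A) ∧ Commute C D ∧
    (∀ t : ℤ, A * (B*A)^t = (B*A)^(-t) * A) ∧
    (∀ q : ℤ, A * C^q = C^(-q) * A) ∧
    (∀ j : ℤ, A * D^j = D^(-j) * A) ∧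
    (∀ j : ℤ, (B*A)^(k*j) = C^(-j) * D^(-j)) ∧
    E = D * A ∧ F = B * D⁻¹ := by
  have hAi : A⁻¹ = A := inv_eq_of_mul_eq_one_right hA
  have hBi : B⁻¹ = B := inv_eq_of_mul_eq_one_right hB
  have hEi : E⁻¹ = E := inv_eq_of_mul_eq_one_right hE
  have hFi : F⁻¹ = F := inv_eq_of_mul_eq_one_right hF
  have cA : ∀ g : G, A * (A * g) = g := fun g => by rw [← mul_assoc, hA, one_mul]
  have cE : ∀ g : G, E * (E * g) = g := fun g => by rw [← mul_assoc, hE, one_mul]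
  have hD_EA : D = E * A := by
    have h := eq_inv_of_mul_eq_one_right hdea
    rw [h, mul_inv_rev, hEi, hAi]
  have hDi : D⁻¹ = A * E := by rw [hD_EA, mul_inv_rev, hAi, hEi]
  have hB_eq : B = D⁻¹ * F := by
    have h := eq_inv_of_mul_eq_one_right hbdf
    rw [h, mul_inv_rev, hFi]
  have hB_AEF : B = A * E * F := by rw [hB_eq, hDi]
  have key : A*E*F*(A*E) = F := by
    have h1 : (A*E*F)*(A*E*F) = 1 := by rw [← hB_AEF]; exact hB
    have h2 : (A*E*F*(A*E))*F = 1 := by rw [mul_assoc]; exact h1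
    rw [eq_inv_of_mul_eq_one_left h2, hFi]
  have keyR : ∀ g : G, A*(E*(F*(A*(E*g)))) = F * g := fun g => by
    have : A*(E*(F*(A*(E*g)))) = (A*E*F*(A*E))*g := by simp only [mul_assoc]
    rw [this, key]
  have hDphi : Commute D (B*A) := by
    show D * (B*A) = (B*A) * D
    rw [hD_EA, hB_AEF]
    simp only [mul_assoc]
    rw [cA, cE, keyR]
  have hphik : (B*A)^k = D⁻¹ * C⁻¹ := by
    have h3 : (E*A)*((B*A)^k*C) = 1 := by
      rw [← mul_assoc]; exact hcke
    have h4 : (B*A)^k*C = (E*A)⁻¹ := eq_inv_of_mul_eq_one_right h3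
    have h5 : (B*A)^k = (E*A)⁻¹ * C⁻¹ := by
      rw [← h4, mul_assoc, mul_inv_cancel, mul_one]
    rw [h5, mul_inv_rev, hAi, hEi, ← hDi]
  have hCi : C⁻¹ = D * (B*A)^k := by rw [hphik, mul_inv_cancel_left]
  have hCphi : Commute C (B*A) := by
    have h5 : Commute C⁻¹ (B*A) := by
      rw [hCi]; exact hDphi.mul_left ((Commute.refl (B*A)).zpow_left k)
    simpa using h5.inv_left
  have hCD : Commute C D := by
    have h5 : Commute C⁻¹ D := by
      rw [hCi]
      exact (Commute.refl D).mul_left ((hDphi.symm).zpow_left k)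
    simpa using h5.inv_left
  have sphi : ∀ t : ℤ, A * (B*A)^t = (B*A)^(-t) * A := by
    intro t
    have base : SemiconjBy A (B*A) (B*A)⁻¹ := by
      show A * (B*A) = (B*A)⁻¹ * A
      rw [mul_inv_rev, hAi, hBi, mul_assoc]
    have h := base.zpow_right t
    rwa [inv_zpow, ← zpow_neg] at h
  have sD : ∀ j : ℤ, A * D^j = D^(-j) * A := by
    intro j
    have base : SemiconjBy A D D⁻¹ := by
      show A * D = D⁻¹ * A
      rw [hDi, hD_EA, mul_assoc]
    have h := base.zpow_right j
    rwa [inv_zpow, ← zpow_neg] at h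
  have hADi : A * D⁻¹ = D * A := by
    have := sD (-1)
    simpa using this
  have sC1 : A * C = C⁻¹ * A := by
    have hC : C = (B*A)^(-k) * D⁻¹ := by
      rw [← inv_inv C, hCi, mul_inv_rev, ← zpow_neg]
    rw [hCi, hC, ← mul_assoc, sphi (-k), neg_neg, mul_assoc, hADi,
      ← mul_assoc, ← (hDphi.zpow_right k).eq]
  have sC : ∀ q : ℤ, A * C^q = C^(-q) * A := by
    intro q
    have base : SemiconjBy A C C⁻¹ := sC1
    have h := base.zpow_right q
    rwa [inv_zpow, ← zpow_neg] at h
  have hkj : ∀ j : ℤ, (B*A)^(k*j) = C^(-j) * D^(-j) := by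
    intro j
    rw [zpow_mul, hphik, (hCD.symm.inv_inv).eq, (hCD.inv_inv).mul_zpow, inv_zpow, inv_zpow,
      ← zpow_neg, ← zpow_neg]
  refine ⟨hDphi, hCphi, hCD, sphi, sC, sD, hkj, ?_, ?_⟩
  · rw [hD_EA, mul_assoc, hA, mul_one]
  · have h := eq_inv_of_mul_eq_one_left (by rw [← mul_assoc]; exact hbdf : F*(D*B) = 1)
    rw [h, mul_inv_rev, hBi]

private lemma Y_even {Q : Type*} [PaperQuandle Q] (a b c d : Q) (t q : ℤ) :
    Y a b c d (2*t) q = (ptSym c ^ q) (((ptSym b * ptSym a) ^ t) d) := by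
  have h2 : (2*t)/2 = t := Int.mul_ediv_cancel_left t (by norm_num)
  rw [Y, if_pos (even_two_mul t), h2]

private lemma Y_odd {Q : Type*} [PaperQuandle Q] (a b c d : Q) (t q : ℤ) :
    Y a b c d (2*t+1) q = (ptSym c ^ q) ((ptSym a) (((ptSym b * ptSym a) ^ t) d)) := by
  have hodd : ¬ Even (2*t+1) := by
    rw [Int.even_add_one]
    simp [even_two_mul]
  have h2 : (2*t+1-1)/2 = t := by
    have h3 : (2*t+1-1) = 2*t := by ring
    rw [h3, Int.mul_ediv_cancel_left t (by norm_num)]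
  rw [Y, if_neg hodd, h2]
  rfl

theorem stmt_19
    {Q : Type*} [PaperQuandle Q] (k : ℤ) (m n : ℕ) (a b c d e f : Q)
    (hk : 1 ≤ k) (hm : 0 < m) (hn : 0 < n)
    (rel_a : ∀ x : Q, x ▷ a ▷ a = x)
    (rel_b : ∀ x : Q, x ▷ b ▷ b = x)
    (rel_e : ∀ x : Q, x ▷ e ▷ e = x)
    (rel_f : ∀ x : Q, x ▷ f ▷ f = x)
    (rel_c : ∀ x : Q, (ptSym c ^ m) x = x)
    (rel_d : ∀ x : Q, (ptSym d ^ n) x = x)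
    (rel_dea : ∀ x : Q, x ▷ d ▷ e ▷ a = x)
    (rel_bdf : ∀ x : Q, x ▷ b ▷ d ▷ f = x)
    (rel_cke : ∀ x : Q, (((ptSym b * ptSym a) ^ k) (x ▷ c)) ▷ a ▷ e = x)
    (rel_fca : ∀ x : Q, (((ptSym b * ptSym a) ^ (k - 1)) (x ▷ f ▷ c)) ▷ a = x) :
    (∀ p q : ℤ,
      (Even p → Y a b c d (p + 2 * k) q = Y a b c d p (q - 1)) ∧
      (Odd p → Y a b c d (p + 2 * k) q = Y a b c d p (q + 1))) ∧
    (∀ z : Q,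
      (∀ T : Set Q, d ∈ T →
        (∀ x ∈ T, ∀ u ∈ ({a, b, c, d, e, f} : Set Q), x ▷ u ∈ T ∧ x ▷⁻¹ u ∈ T) →
        z ∈ T) →
      ∃ p q : ℤ, 0 ≤ p ∧ p ≤ 2 * k - 1 ∧ 0 ≤ q ∧ q ≤ (m : ℤ) - 1 ∧
        z = Y a b c d p q) ∧
    (MulAction.orbit
      (Subgroup.closure ({ptSym a, ptSym b, ptSym c, ptSym d, ptSym e, ptSym f} :
        Set (Equiv.Perm Q))) d).Finite ∧
    ((MulAction.orbit
      (Subgroup.closure ({ptSym a, ptSym b, ptSym c, ptSym d, ptSym e, ptSym f} :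
        Set (Equiv.Perm Q))) d).ncard : ℤ) ≤ 2 * k * m := by
  classical
  obtain ⟨hDφ, hCφ, hCD, sφ, sC, sD, hkj, hE_DA, hF_BDi⟩ :=
    grp k (ptSym a) (ptSym b) (ptSym c) (ptSym d) (ptSym e) (ptSym f)
      (Equiv.ext rel_a) (Equiv.ext rel_b) (Equiv.ext rel_e) (Equiv.ext rel_f)
      (Equiv.ext rel_dea) (Equiv.ext rel_bdf) (Equiv.ext rel_cke)
  have ap : ∀ (g h : Equiv.Perm Q) (x : Q), (g*h) x = g (h x) := fun _ _ _ => rfl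
  have apEq : ∀ {g h : Equiv.Perm Q}, g = h → ∀ x : Q, g x = h x := by
    intro g h hgh x; rw [hgh]
  have mv : ∀ {g₁ g₂ g₃ g₄ : Equiv.Perm Q}, g₁*g₂ = g₃*g₄ → ∀ x : Q, g₁ (g₂ x) = g₃ (g₄ x) := by
    intro g₁ g₂ g₃ g₄ h x
    rw [← ap, h, ap]
  have zsplit : ∀ (g : Equiv.Perm Q) (s t : ℤ) (x : Q), (g^(s+t)) x = (g^s) ((g^t) x) :=
    fun g s t x => by rw [zpow_add, ap]
  have hYe : ∀ t q : ℤ, Y a b c d (2*t) q = (ptSym c^q) (((ptSym b*ptSym a)^t) d) :=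
    Y_even a b c d
  have hYo : ∀ t q : ℤ, Y a b c d (2*t+1) q
      = (ptSym c^q) (ptSym a (((ptSym b*ptSym a)^t) d)) := Y_odd a b c d
  have apA2 : ∀ x : Q, ptSym a (ptSym a x) = x := rel_a
  have hfix1 : ptSym d d = d := PaperQuandle.fix d
  have invfix : ∀ (g : Equiv.Perm Q) (z : Q), g z = z → g⁻¹ z = z := by
    intro g z h
    conv_lhs => rw [← h]
    exact Equiv.symm_apply_apply g z
  have hfixN : ∀ nn : ℕ, ((ptSym d)^nn) d = d := by
    intro nn; induction nn with
    | zero => rfl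
    | succ i ih => rw [pow_succ, ap, hfix1]; exact ih
  have hfixZ : ∀ j : ℤ, ((ptSym d)^j) d = d := by
    intro j
    obtain ⟨nn, rfl | rfl⟩ := j.eq_nat_or_neg
    · rw [zpow_natCast]; exact hfixN nn
    · rw [zpow_neg, zpow_natCast]
      exact invfix _ _ (hfixN nn)
  have hfixInv : (ptSym d)⁻¹ d = d := invfix _ _ hfix1
  -- commutation facts as pointwise movers
  have hΦA : (ptSym b*ptSym a) * ptSym a = ptSym a * (ptSym b*ptSym a)⁻¹ := by
    have h := sφ (-1)
    rw [zpow_neg, zpow_one, neg_neg, zpow_one] at h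
    exact h.symm
  have hDA : ptSym d * ptSym a = ptSym a * (ptSym d)⁻¹ := by
    have h := sD (-1)
    rw [zpow_neg, zpow_one, neg_neg, zpow_one] at h
    exact h.symm
  have hDC : ∀ q : ℤ, ptSym d * (ptSym c)^q = (ptSym c)^q * ptSym d :=
    fun q => ((hCD.zpow_left q).symm).eq
  have hDΦ : ∀ t : ℤ, ptSym d * (ptSym b*ptSym a)^t = (ptSym b*ptSym a)^t * ptSym d :=
    fun t => (hDφ.zpow_right t).eq
  have hDiΦ : ∀ t : ℤ, (ptSym d)⁻¹ * (ptSym b*ptSym a)^t = (ptSym b*ptSym a)^t * (ptSym d)⁻¹ :=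
    fun t => ((hDφ.zpow_right t).inv_left).eq
  have hΦC : ∀ (t q : ℤ), (ptSym b*ptSym a)^t * (ptSym c)^q = (ptSym c)^q * (ptSym b*ptSym a)^t :=
    fun t q => ((hCφ.zpow_zpow q t).symm).eq
  have hΦCq : ∀ q : ℤ, (ptSym b*ptSym a) * (ptSym c)^q = (ptSym c)^q * (ptSym b*ptSym a) :=
    fun q => ((hCφ.zpow_left q).symm).eq
  have hCCq : ∀ q : ℤ, ptSym c * (ptSym c)^q = (ptSym c)^(q+1) := fun q => by
    rw [show q+1 = 1+q by ring, zpow_add, zpow_one]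
  have hCiCq : ∀ q : ℤ, (ptSym c)⁻¹ * (ptSym c)^q = (ptSym c)^(q-1) := fun q => by
    rw [show q-1 = -1+q by ring, zpow_add, zpow_neg_one]
  have apCC : ∀ (q : ℤ) (x : Q), ptSym c (((ptSym c)^q) x) = ((ptSym c)^(q+1)) x := by
    intro q x
    rw [← ap, hCCq]
  have apCiC : ∀ (q : ℤ) (x : Q), (ptSym c)⁻¹ (((ptSym c)^q) x) = ((ptSym c)^(q-1)) x := by
    intro q x
    rw [← ap, hCiCq]
  have hA2p : ptSym a * ptSym a = 1 := Equiv.ext rel_a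
  have hBΦA : ptSym b = (ptSym b * ptSym a) * ptSym a := by
    rw [mul_assoc, hA2p, mul_one]
  have apB : ∀ x : Q, ptSym b x = (ptSym b * ptSym a) (ptSym a x) := by
    intro x
    conv_lhs => rw [hBΦA]
    rfl
  have apΦinv : ∀ x : Q, (ptSym b*ptSym a)⁻¹ x = ((ptSym b*ptSym a)^(-1:ℤ)) x := by
    intro x; rw [zpow_neg_one]
  have apΦ1 : ∀ x : Q, (ptSym b*ptSym a) x = ((ptSym b*ptSym a)^(1:ℤ)) x := by
    intro x; rw [zpow_one]
  have shift : ∀ (s t : ℤ), ((ptSym b*ptSym a)^s) (((ptSym b*ptSym a)^t) d)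
      = ((ptSym b*ptSym a)^(s+t)) d := fun s t => (zsplit _ s t d).symm
  have hkjap : ∀ j : ℤ, (((ptSym b*ptSym a))^(k*j)) d = ((ptSym c)^(-j)) d := by
    intro j
    rw [apEq (hkj j) d, ap, hfixZ]
  -- the index-shift lemmas
  have L1e : ∀ t q j : ℤ, Y a b c d (2*(t+k*j)) q = Y a b c d (2*t) (q-j) := by
    intro t q j
    rw [hYe, hYe, zsplit _ t (k*j) d, hkjap j,
      mv (hΦC t (-j)) d, ← zsplit (ptSym c) q (-j), show q + -j = q - j by ring]
  have L1o : ∀ t q j : ℤ, Y a b c d (2*(t+k*j)+1) q = Y a b c d (2*t+1) (q+j) := by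
    intro t q j
    rw [hYo, hYo, zsplit _ t (k*j) d, hkjap j,
      mv (hΦC t (-j)) d, mv (sC (-j)) _, neg_neg, ← zsplit (ptSym c) q j]
  have hCm : (ptSym c)^(m:ℕ) = 1 := Equiv.ext rel_c
  have hCmz : ∀ i : ℤ, (ptSym c)^((m:ℤ)*i) = 1 := fun i => by
    rw [zpow_mul, zpow_natCast, hCm, one_zpow]
  have L2 : ∀ (p q i : ℤ), Y a b c d p (q + m*i) = Y a b c d p q := by
    intro p q i
    rcases Int.even_or_odd p with ⟨t, ht⟩ | ⟨t, ht⟩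
    · rw [show p = 2*t by omega, hYe, hYe, zsplit (ptSym c) q ((m:ℤ)*i),
        apEq (hCmz i), Equiv.Perm.one_apply]
    · rw [show p = 2*t+1 by omega, hYo, hYo, zsplit (ptSym c) q ((m:ℤ)*i),
        apEq (hCmz i), Equiv.Perm.one_apply]
  have hk2 : (0:ℤ) < 2*k := by linarith
  have hm2 : (0:ℤ) < (m:ℤ) := by exact_mod_cast hm
  have norm : ∀ p q : ℤ, ∃ p' q' : ℤ, 0 ≤ p' ∧ p' ≤ 2*k-1 ∧ 0 ≤ q' ∧ q' ≤ (m:ℤ)-1 ∧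
      Y a b c d p q = Y a b c d p' q' := by
    intro p q
    have hr0 : 0 ≤ p % (2*k) := Int.emod_nonneg p (by linarith)
    have hr1 : p % (2*k) < 2*k := Int.emod_lt_of_pos p hk2
    have hp : p % (2*k) + 2*(k*(p/(2*k))) = p := by
      have h := Int.emod_add_mul_ediv p (2*k)
      rw [mul_assoc] at h
      exact h
    rcases Int.even_or_odd (p % (2*k)) with ⟨t, ht⟩ | ⟨t, ht⟩
    · refine ⟨2*t, (q - p/(2*k)) % m, by omega, by omega,
        Int.emod_nonneg _ (by omega),
        by have := Int.emod_lt_of_pos (q - p/(2*k)) hm2; omega, ?_⟩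
      have e1 := L1e t q (p/(2*k))
      rw [show 2*(t + k*(p/(2*k))) = p by omega] at e1
      have e3 := L2 (2*t) ((q - p/(2*k)) % m) ((q - p/(2*k))/m)
      rw [show (q - p/(2*k)) % m + (m:ℤ)*((q - p/(2*k))/m) = q - p/(2*k) from
        Int.emod_add_mul_ediv _ _] at e3
      exact e1.trans e3
    · refine ⟨2*t+1, (q + p/(2*k)) % m, by omega, by omega,
        Int.emod_nonneg _ (by omega),
        by have := Int.emod_lt_of_pos (q + p/(2*k)) hm2; omega, ?_⟩
      have e1 := L1o t q (p/(2*k))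
      rw [show 2*(t + k*(p/(2*k)))+1 = p by omega] at e1
      have e3 := L2 (2*t+1) ((q + p/(2*k)) % m) ((q + p/(2*k))/m)
      rw [show (q + p/(2*k)) % m + (m:ℤ)*((q + p/(2*k))/m) = q + p/(2*k) from
        Int.emod_add_mul_ediv _ _] at e3
      exact e1.trans e3
  -- action lemmas
  have hactA : ∀ p q : ℤ, ∃ p' q' : ℤ, ptSym a (Y a b c d p q) = Y a b c d p' q' := by
    intro p q
    rcases Int.even_or_odd p with ⟨t, ht⟩ | ⟨t, ht⟩
    · refine ⟨2*t+1, -q, ?_⟩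
      rw [show p = 2*t by omega, hYe, hYo]
      exact mv (sC q) _
    · refine ⟨2*t, -q, ?_⟩
      rw [show p = 2*t+1 by omega, hYo, hYe,
        mv (sC q) (ptSym a (((ptSym b*ptSym a)^t) d)), apA2]
  have hactB : ∀ p q : ℤ, ∃ p' q' : ℤ, ptSym b (Y a b c d p q) = Y a b c d p' q' := by
    intro p q
    rcases Int.even_or_odd p with ⟨t, ht⟩ | ⟨t, ht⟩
    · refine ⟨2*(t-1)+1, -q, ?_⟩
      rw [show p = 2*t by omega, hYe, hYo, apB, mv (sC q) _, mv (hΦCq (-q)) _,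
        mv hΦA _, apΦinv, shift (-1) t, show (-1)+t = t-1 by ring]
    · refine ⟨2*(t+1), -q, ?_⟩
      rw [show p = 2*t+1 by omega, hYo, hYe, apB, mv (sC q) _, apA2,
        mv (hΦCq (-q)) _, apΦ1 (((ptSym b*ptSym a)^t) d), shift 1 t,
        show (1:ℤ)+t = t+1 by ring]
  have hactC : ∀ p q : ℤ, ∃ p' q' : ℤ, ptSym c (Y a b c d p q) = Y a b c d p' q' := by
    intro p q
    rcases Int.even_or_odd p with ⟨t, ht⟩ | ⟨t, ht⟩
    · exact ⟨2*t, q+1, by rw [show p = 2*t by omega, hYe, hYe, apCC q _]⟩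
    · exact ⟨2*t+1, q+1, by rw [show p = 2*t+1 by omega, hYo, hYo, apCC q _]⟩
  have hactCi : ∀ p q : ℤ, ∃ p' q' : ℤ, (ptSym c)⁻¹ (Y a b c d p q) = Y a b c d p' q' := by
    intro p q
    rcases Int.even_or_odd p with ⟨t, ht⟩ | ⟨t, ht⟩
    · exact ⟨2*t, q-1, by rw [show p = 2*t by omega, hYe, hYe, apCiC q _]⟩
    · exact ⟨2*t+1, q-1, by rw [show p = 2*t+1 by omega, hYo, hYo, apCiC q _]⟩
  have hactD : ∀ p q : ℤ, ptSym d (Y a b c d p q) = Y a b c d p q := by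
    intro p q
    rcases Int.even_or_odd p with ⟨t, ht⟩ | ⟨t, ht⟩
    · rw [show p = 2*t by omega, hYe, mv (hDC q) _, mv (hDΦ t) _, hfix1]
    · rw [show p = 2*t+1 by omega, hYo, mv (hDC q) _, mv hDA _, mv (hDiΦ t) _, hfixInv]
  have hactDi : ∀ p q : ℤ, (ptSym d)⁻¹ (Y a b c d p q) = Y a b c d p q :=
    fun p q => invfix _ _ (hactD p q)
  -- the target set
  set T : Set Q := {z | ∃ p q : ℤ, 0 ≤ p ∧ p ≤ 2*k-1 ∧ 0 ≤ q ∧ q ≤ (m:ℤ)-1 ∧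
    z = Y a b c d p q} with hTdef
  have memT : ∀ p q : ℤ, Y a b c d p q ∈ T := by
    intro p q
    obtain ⟨p', q', h1, h2, h3, h4, h5⟩ := norm p q
    exact ⟨p', q', h1, h2, h3, h4, h5⟩
  have hY00 : Y a b c d (2*0) 0 = d := by
    rw [hYe]; simp
  have hdT : d ∈ T := ⟨2*0, 0, by norm_num, by omega, le_refl 0, by omega, hY00.symm⟩
  have mA : ∀ p q : ℤ, ptSym a (Y a b c d p q) ∈ T := fun p q => by
    obtain ⟨p', q', h⟩ := hactA p q; rw [h]; exact memT p' q'
  have mB : ∀ p q : ℤ, ptSym b (Y a b c d p q) ∈ T := fun p q => by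
    obtain ⟨p', q', h⟩ := hactB p q; rw [h]; exact memT p' q'
  have mC : ∀ p q : ℤ, ptSym c (Y a b c d p q) ∈ T := fun p q => by
    obtain ⟨p', q', h⟩ := hactC p q; rw [h]; exact memT p' q'
  have mCi : ∀ p q : ℤ, (ptSym c)⁻¹ (Y a b c d p q) ∈ T := fun p q => by
    obtain ⟨p', q', h⟩ := hactCi p q; rw [h]; exact memT p' q'
  have mD : ∀ p q : ℤ, ptSym d (Y a b c d p q) ∈ T := fun p q => by
    rw [hactD p q]; exact memT p q
  have mDi : ∀ p q : ℤ, (ptSym d)⁻¹ (Y a b c d p q) ∈ T := fun p q => by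
    rw [hactDi p q]; exact memT p q
  -- quandle-level auxiliary facts
  have invA : ∀ x : Q, x ▷⁻¹ a = x ▷ a := fun x => by
    conv_lhs => rw [← rel_a x]
    exact PaperQuandle.inv_rhd (x ▷ a) a
  have invB : ∀ x : Q, x ▷⁻¹ b = x ▷ b := fun x => by
    conv_lhs => rw [← rel_b x]
    exact PaperQuandle.inv_rhd (x ▷ b) b
  have invE : ∀ x : Q, x ▷⁻¹ e = x ▷ e := fun x => by
    conv_lhs => rw [← rel_e x]
    exact PaperQuandle.inv_rhd (x ▷ e) e
  have invF : ∀ x : Q, x ▷⁻¹ f = x ▷ f := fun x => by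
    conv_lhs => rw [← rel_f x]
    exact PaperQuandle.inv_rhd (x ▷ f) f
  have apE : ∀ x : Q, x ▷ e = ptSym d (ptSym a x) :=
    fun x => congrArg (fun g : Equiv.Perm Q => g x) hE_DA
  have apF : ∀ x : Q, x ▷ f = ptSym b ((ptSym d)⁻¹ x) :=
    fun x => congrArg (fun g : Equiv.Perm Q => g x) hF_BDi
  have hclosed : ∀ x ∈ T, ∀ u ∈ ({a, b, c, d, e, f} : Set Q), x ▷ u ∈ T ∧ x ▷⁻¹ u ∈ T := by
    rintro x ⟨p, q, -, -, -, -, rfl⟩ u hu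
    simp only [Set.mem_insert_iff, Set.mem_singleton_iff] at hu
    rcases hu with rfl | rfl | rfl | rfl | rfl | rfl
    · exact ⟨mA p q, by rw [invA]; exact mA p q⟩
    · exact ⟨mB p q, by rw [invB]; exact mB p q⟩
    · exact ⟨mC p q, mCi p q⟩
    · exact ⟨mD p q, mDi p q⟩
    · constructor
      · rw [apE]
        obtain ⟨p', q', h⟩ := hactA p q
        rw [h]; exact mD p' q'
      · rw [invE, apE]
        obtain ⟨p', q', h⟩ := hactA p q
        rw [h]; exact mD p' q'
    · constructor
      · rw [apF, hactDi p q]; exact mB p q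
      · rw [invF, apF, hactDi p q]; exact mB p q
  refine ⟨?_, ?_, ?_, ?_⟩
  · -- Part 1
    intro p q
    constructor
    · rintro ⟨t, ht⟩
      rw [show p + 2*k = 2*(t+k*1) by omega, show p = 2*t by omega]
      exact L1e t q 1
    · rintro ⟨t, ht⟩
      rw [show p + 2*k = 2*(t+k*1)+1 by omega, show p = 2*t+1 by omega]
      exact L1o t q 1
  · -- Part 2
    intro z hz
    exact hz T hdT hclosed
  · -- Part 3: finiteness
    have horbT : MulAction.orbit
        (Subgroup.closure ({ptSym a, ptSym b, ptSym c, ptSym d, ptSym e, ptSym f} :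
          Set (Equiv.Perm Q))) d ⊆ T := by
      have hgen : ∀ u ∈ ({a,b,c,d,e,f} : Set Q),
          (∀ z ∈ T, ptSym u z ∈ T) ∧ (∀ z ∈ T, (ptSym u)⁻¹ z ∈ T) := fun u hu =>
        ⟨fun z hz => (hclosed z hz u hu).1, fun z hz => (hclosed z hz u hu).2⟩
      have hK : ∀ g ∈ Subgroup.closure
          ({ptSym a, ptSym b, ptSym c, ptSym d, ptSym e, ptSym f} : Set (Equiv.Perm Q)),
          (∀ z ∈ T, g z ∈ T) ∧ (∀ z ∈ T, g⁻¹ z ∈ T) := by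
        intro g hg
        induction hg using Subgroup.closure_induction with
        | mem x hx =>
          rcases hx with rfl | rfl | rfl | rfl | rfl | rfl
          · exact hgen a (by simp)
          · exact hgen b (by simp)
          · exact hgen c (by simp)
          · exact hgen d (by simp)
          · exact hgen e (by simp)
          · exact hgen f (by simp)
        | one => exact ⟨fun z hz => hz, fun z hz => by simpa using hz⟩
        | mul x y hx hy ihx ihy =>
          refine ⟨fun z hz => ?_, fun z hz => ?_⟩
          · rw [ap]; exact ihx.1 _ (ihy.1 z hz)
          · rw [mul_inv_rev, ap]; exact ihy.2 _ (ihx.2 z hz)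
        | inv x hx ih =>
          exact ⟨ih.2, fun z hz => by rw [inv_inv]; exact ih.1 z hz⟩
      rintro z ⟨⟨g, hg⟩, rfl⟩
      exact (hK g hg).1 d hdT
    have hTsub : T ⊆ (fun pq : ℤ × ℤ => Y a b c d pq.1 pq.2) ''
        (Set.Icc 0 (2*k-1) ×ˢ Set.Icc 0 ((m:ℤ)-1)) := by
      rintro z ⟨p, q, h1, h2, h3, h4, rfl⟩
      exact ⟨(p,q), ⟨⟨h1,h2⟩,⟨h3,h4⟩⟩, rfl⟩
    have himfin : ((fun pq : ℤ × ℤ => Y a b c d pq.1 pq.2) ''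
        (Set.Icc 0 (2*k-1) ×ˢ Set.Icc 0 ((m:ℤ)-1))).Finite :=
      ((Set.finite_Icc _ _).prod (Set.finite_Icc _ _)).image _
    exact himfin.subset (horbT.trans hTsub)
  · -- Part 4: cardinality bound
    have horbT : MulAction.orbit
        (Subgroup.closure ({ptSym a, ptSym b, ptSym c, ptSym d, ptSym e, ptSym f} :
          Set (Equiv.Perm Q))) d ⊆ T := by
      have hgen : ∀ u ∈ ({a,b,c,d,e,f} : Set Q),
          (∀ z ∈ T, ptSym u z ∈ T) ∧ (∀ z ∈ T, (ptSym u)⁻¹ z ∈ T) := fun u hu =>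
        ⟨fun z hz => (hclosed z hz u hu).1, fun z hz => (hclosed z hz u hu).2⟩
      have hK : ∀ g ∈ Subgroup.closure
          ({ptSym a, ptSym b, ptSym c, ptSym d, ptSym e, ptSym f} : Set (Equiv.Perm Q)),
          (∀ z ∈ T, g z ∈ T) ∧ (∀ z ∈ T, g⁻¹ z ∈ T) := by
        intro g hg
        induction hg using Subgroup.closure_induction with
        | mem x hx =>
          rcases hx with rfl | rfl | rfl | rfl | rfl | rfl
          · exact hgen a (by simp)
          · exact hgen b (by simp)
          · exact hgen c (by simp)
          · exact hgen d (by simp)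
          · exact hgen e (by simp)
          · exact hgen f (by simp)
        | one => exact ⟨fun z hz => hz, fun z hz => by simpa using hz⟩
        | mul x y hx hy ihx ihy =>
          refine ⟨fun z hz => ?_, fun z hz => ?_⟩
          · rw [ap]; exact ihx.1 _ (ihy.1 z hz)
          · rw [mul_inv_rev, ap]; exact ihy.2 _ (ihx.2 z hz)
        | inv x hx ih =>
          exact ⟨ih.2, fun z hz => by rw [inv_inv]; exact ih.1 z hz⟩
      rintro z ⟨⟨g, hg⟩, rfl⟩
      exact (hK g hg).1 d hdT
    have hTsub : T ⊆ (fun pq : ℤ × ℤ => Y a b c d pq.1 pq.2) ''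
        (Set.Icc 0 (2*k-1) ×ˢ Set.Icc 0 ((m:ℤ)-1)) := by
      rintro z ⟨p, q, h1, h2, h3, h4, rfl⟩
      exact ⟨(p,q), ⟨⟨h1,h2⟩,⟨h3,h4⟩⟩, rfl⟩
    have hboxfin : (Set.Icc (0:ℤ) (2*k-1) ×ˢ Set.Icc (0:ℤ) ((m:ℤ)-1)).Finite :=
      (Set.finite_Icc _ _).prod (Set.finite_Icc _ _)
    have h1 : (MulAction.orbit
        (Subgroup.closure ({ptSym a, ptSym b, ptSym c, ptSym d, ptSym e, ptSym f} :
          Set (Equiv.Perm Q))) d).ncard ≤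
        ((fun pq : ℤ × ℤ => Y a b c d pq.1 pq.2) ''
          (Set.Icc 0 (2*k-1) ×ˢ Set.Icc 0 ((m:ℤ)-1))).ncard :=
      Set.ncard_le_ncard (horbT.trans hTsub) (hboxfin.image _)
    have h2 : ((fun pq : ℤ × ℤ => Y a b c d pq.1 pq.2) ''
        (Set.Icc 0 (2*k-1) ×ˢ Set.Icc 0 ((m:ℤ)-1))).ncard ≤
        (Set.Icc (0:ℤ) (2*k-1) ×ˢ Set.Icc (0:ℤ) ((m:ℤ)-1)).ncard :=
      Set.ncard_image_le hboxfin
    have h3 : (Set.Icc (0:ℤ) (2*k-1) ×ˢ Set.Icc (0:ℤ) ((m:ℤ)-1)).ncard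
        = (2*k).toNat * m := by
      rw [show (Set.Icc (0:ℤ) (2*k-1) ×ˢ Set.Icc (0:ℤ) ((m:ℤ)-1))
          = ((Finset.Icc (0:ℤ) (2*k-1) ×ˢ Finset.Icc (0:ℤ) ((m:ℤ)-1) : Finset (ℤ×ℤ)) :
            Set (ℤ×ℤ)) from by
        rw [Finset.coe_product, Finset.coe_Icc, Finset.coe_Icc]]
      rw [Set.ncard_coe_finset, Finset.card_product, Int.card_Icc, Int.card_Icc]
      have e1 : (2*k-1+1-0).toNat = (2*k).toNat := by omega
      have e2 : ((m:ℤ)-1+1-0).toNat = m := by omega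
      rw [e1, e2]
    have h4 := le_trans h1 (le_trans h2 (le_of_eq h3))
    calc ((MulAction.orbit
        (Subgroup.closure ({ptSym a, ptSym b, ptSym c, ptSym d, ptSym e, ptSym f} :
          Set (Equiv.Perm Q))) d).ncard : ℤ)
        ≤ (((2*k).toNat * m : ℕ) : ℤ) := by exact_mod_cast h4
      _ = 2*k*m := by
          push_cast
          rw [Int.toNat_of_nonneg (by linarith : (0:ℤ) ≤ 2*k)]
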